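/- Let γ ∈ {1, −1}. For each integer n define on the open set Ω = {(t,x) ∈ ℝ² : e^x ≠ γ} the vector field L_n = e^{-nt+(n−1)x} [ e^{2x} − (n+1) γ e^{x} + (1/2) n(n+1) γ² ] (e^{x} − γ)^{−n−1} ∂_t + e^{-nt+(n−1)x} [ n e^{x} − (1/2) n(n+1) γ ] (e^{x} − γ)^{−n} ∂_x, where the exponents −n−1 and −n are integer powers. Then for all integers m, n one has [L_m, L_n] = (m − n) L_{m+n} at every point of Ω. (Realization 𝔚₃ of the Witt algebra from Theorem 1.) -/

import Mathlib

noncomputable section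

/-- Partial derivative of `f : ℝ² → ℝ` (curried) in the first variable `t`. -/
def qt (f : ℝ → ℝ → ℝ) (t x : ℝ) : ℝ := deriv (fun s => f s x) t

/-- Partial derivative in the second variable `x`. -/
def qx (f : ℝ → ℝ → ℝ) (t x : ℝ) : ℝ := deriv (fun s => f t s) x

/-- A vector field `τ ∂_t + ξ ∂_x` on ℝ² with coordinates `(t,x)`. -/
structure VF2 where
  tau : ℝ → ℝ → ℝ
  xi  : ℝ → ℝ → ℝ

/-- Action of a vector field on a function: `X(F) = τ F_t + ξ F_x`. -/
def VF2.app (X : VF2) (F : ℝ → ℝ → ℝ) (t x : ℝ) : ℝ :=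
  X.tau t x * qt F t x + X.xi t x * qx F t x

/-- Lie bracket of vector fields on ℝ². -/
def VF2.bracket (X Y : VF2) : VF2 where
  tau := fun t x => X.app Y.tau t x - Y.app X.tau t x
  xi  := fun t x => X.app Y.xi t x - Y.app X.xi t x

/-- Scalar multiple of a vector field. -/
def VF2.smul (c : ℝ) (X : VF2) : VF2 where
  tau := fun t x => c * X.tau t x
  xi  := fun t x => c * X.xi t x

/-- The vector fields of the realization 𝔚₃ (defined on `Ω = {e^x ≠ γ}`):
`L n = e^{-nt+(n-1)x}[e^{2x} - (n+1)γe^x + (1/2)n(n+1)γ²](e^x - γ)^{-n-1} ∂_t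
     + e^{-nt+(n-1)x}[n e^x - (1/2)n(n+1)γ](e^x - γ)^{-n} ∂_x`. -/
def W3 (γ : ℝ) (n : ℤ) : VF2 where
  tau := fun t x => Real.exp (-(n : ℝ) * t + ((n : ℝ) - 1) * x) *
    (Real.exp (2 * x) - ((n : ℝ) + 1) * γ * Real.exp x
      + (1 / 2) * (n : ℝ) * ((n : ℝ) + 1) * γ ^ 2) *
    (Real.exp x - γ) ^ (-n - 1 : ℤ)
  xi  := fun t x => Real.exp (-(n : ℝ) * t + ((n : ℝ) - 1) * x) *
    ((n : ℝ) * Real.exp x - (1 / 2) * (n : ℝ) * ((n : ℝ) + 1) * γ) *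
    (Real.exp x - γ) ^ (-n : ℤ)


section Aux

private lemma h_exp_t (n : ℤ) (t x : ℝ) :
    HasDerivAt (fun s : ℝ => Real.exp (-(n:ℝ) * s + ((n:ℝ)-1)*x))
      (Real.exp (-(n:ℝ) * t + ((n:ℝ)-1)*x) * -(n:ℝ)) t := by
  have h : HasDerivAt (fun s : ℝ => -(n:ℝ)*s + ((n:ℝ)-1)*x) (-(n:ℝ)) t := by
    simpa using ((hasDerivAt_id t).const_mul (-(n:ℝ))).add_const (((n:ℝ)-1)*x)
  exact h.exp

private lemma h_exp_x (n : ℤ) (t x : ℝ) :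
    HasDerivAt (fun s : ℝ => Real.exp (-(n:ℝ) * t + ((n:ℝ)-1)*s))
      (Real.exp (-(n:ℝ) * t + ((n:ℝ)-1)*x) * ((n:ℝ)-1)) x := by
  have h : HasDerivAt (fun s : ℝ => -(n:ℝ)*t + ((n:ℝ)-1)*s) ((n:ℝ)-1) x := by
    simpa using ((hasDerivAt_id x).const_mul ((n:ℝ)-1)).const_add (-(n:ℝ)*t)
  exact h.exp

private lemma h_zpow (γ : ℝ) (k : ℤ) (x : ℝ) (hd : Real.exp x - γ ≠ 0) :
    HasDerivAt (fun s : ℝ => (Real.exp s - γ) ^ k)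
      (((k:ℝ) * (Real.exp x - γ) ^ (k-1)) * Real.exp x) x := by
  have hi : HasDerivAt (fun s : ℝ => Real.exp s - γ) (Real.exp x) x :=
    (Real.hasDerivAt_exp x).sub_const γ
  have := (hasDerivAt_zpow k (Real.exp x - γ) (Or.inl hd)).comp x hi
  exact this

private lemma qt_W3_tau (γ : ℝ) (n : ℤ) (t x : ℝ) :
    qt (W3 γ n).tau t x = -(n : ℝ) * (W3 γ n).tau t x := by
  unfold qt W3
  simp only
  rw [(((h_exp_t n t x).mul_const
      (Real.exp (2*x) - ((n:ℝ)+1)*γ*Real.exp x + (1/2)*(n:ℝ)*((n:ℝ)+1)*γ^2)).mul_const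
      ((Real.exp x - γ) ^ (-n-1 : ℤ))).deriv]
  ring

private lemma qt_W3_xi (γ : ℝ) (n : ℤ) (t x : ℝ) :
    qt (W3 γ n).xi t x = -(n : ℝ) * (W3 γ n).xi t x := by
  unfold qt W3
  simp only
  rw [(((h_exp_t n t x).mul_const
      ((n:ℝ)*Real.exp x - (1/2)*(n:ℝ)*((n:ℝ)+1)*γ)).mul_const
      ((Real.exp x - γ) ^ (-n : ℤ))).deriv]
  ring

private lemma qx_W3_tau (γ : ℝ) (n : ℤ) (t x : ℝ) (hd : Real.exp x - γ ≠ 0) :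
    qx (W3 γ n).tau t x =
      Real.exp (-(n:ℝ)*t + ((n:ℝ)-1)*x) *
      ( ((((n:ℝ)-1) * (Real.exp x * Real.exp x - ((n:ℝ)+1)*γ*Real.exp x
            + (1/2)*(n:ℝ)*((n:ℝ)+1)*γ^2)
          + (2*(Real.exp x * Real.exp x) - ((n:ℝ)+1)*γ*Real.exp x))
            * ((Real.exp x - γ)^(-n:ℤ) * (Real.exp x - γ)⁻¹))
        + (Real.exp x * Real.exp x - ((n:ℝ)+1)*γ*Real.exp x
            + (1/2)*(n:ℝ)*((n:ℝ)+1)*γ^2)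
            * ((-(n:ℝ))-1) * ((Real.exp x - γ)^(-n:ℤ) * (Real.exp x - γ)⁻¹ * (Real.exp x - γ)⁻¹)
            * Real.exp x ) := by
  unfold qx W3
  simp only
  have h1 := h_exp_x n t x
  have h2 : HasDerivAt (fun s : ℝ => Real.exp (2*s) - ((n:ℝ)+1)*γ*Real.exp s
      + (1/2)*(n:ℝ)*((n:ℝ)+1)*γ^2)
      (Real.exp (2*x) * 2 - ((n:ℝ)+1)*γ*Real.exp x) x := by
    have ha : HasDerivAt (fun s : ℝ => Real.exp (2*s)) (Real.exp (2*x) * 2) x := by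
      have h : HasDerivAt (fun s : ℝ => (2:ℝ)*s) 2 x := by
        simpa using (hasDerivAt_id x).const_mul (2:ℝ)
      exact h.exp
    have hb : HasDerivAt (fun s : ℝ => ((n:ℝ)+1)*γ*Real.exp s) (((n:ℝ)+1)*γ*Real.exp x) x :=
      (Real.hasDerivAt_exp x).const_mul _
    exact (ha.sub hb).add_const _
  have h3 := h_zpow γ (-n-1) x hd
  rw [((h1.fun_mul h2).fun_mul h3).deriv]
  have e1 : (Real.exp x - γ)^(-n-1:ℤ)
      = (Real.exp x - γ)^(-n:ℤ) * (Real.exp x - γ)⁻¹ := by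
    rw [show (-n-1:ℤ) = -n + (-1) by ring, zpow_add₀ hd, zpow_neg_one]
  have e2 : (Real.exp x - γ)^(-n-1-1:ℤ)
      = (Real.exp x - γ)^(-n:ℤ) * (Real.exp x - γ)⁻¹ * (Real.exp x - γ)⁻¹ := by
    rw [show (-n-1-1:ℤ) = -n + (-1) + (-1) by ring, zpow_add₀ hd, zpow_add₀ hd, zpow_neg_one]
  have he2 : Real.exp (2*x) = Real.exp x * Real.exp x := by
    rw [two_mul, Real.exp_add]
  rw [e1, e2, he2]
  push_cast
  ring

private lemma qx_W3_xi (γ : ℝ) (n : ℤ) (t x : ℝ) (hd : Real.exp x - γ ≠ 0) :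
    qx (W3 γ n).xi t x =
      Real.exp (-(n:ℝ)*t + ((n:ℝ)-1)*x) *
      ( ((((n:ℝ)-1) * ((n:ℝ)*Real.exp x - (1/2)*(n:ℝ)*((n:ℝ)+1)*γ)
          + (n:ℝ)*Real.exp x) * (Real.exp x - γ)^(-n:ℤ))
        + ((n:ℝ)*Real.exp x - (1/2)*(n:ℝ)*((n:ℝ)+1)*γ)
            * (-(n:ℝ)) * ((Real.exp x - γ)^(-n:ℤ) * (Real.exp x - γ)⁻¹)
            * Real.exp x ) := by
  unfold qx W3
  simp only
  have h1 := h_exp_x n t x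
  have h2 : HasDerivAt (fun s : ℝ => (n:ℝ)*Real.exp s - (1/2)*(n:ℝ)*((n:ℝ)+1)*γ)
      ((n:ℝ)*Real.exp x) x :=
    ((Real.hasDerivAt_exp x).const_mul _).sub_const _
  have h3 := h_zpow γ (-n) x hd
  rw [((h1.fun_mul h2).fun_mul h3).deriv]
  have e1 : (Real.exp x - γ)^(-n-1:ℤ)
      = (Real.exp x - γ)^(-n:ℤ) * (Real.exp x - γ)⁻¹ := by
    rw [show (-n-1:ℤ) = -n + (-1) by ring, zpow_add₀ hd, zpow_neg_one]
  rw [e1]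
  push_cast
  ring

end Aux

set_option maxHeartbeats 2000000 in
/-- Realization 𝔚₃ of the Witt algebra: on `Ω = {(t,x) : e^x ≠ γ}` one has
`[L m, L n] = (m - n) L (m + n)`. -/


theorem witt_realization_W3 (γ : ℝ) (hγ : γ = 1 ∨ γ = -1) (m n : ℤ)
    (t x : ℝ) (hx : Real.exp x ≠ γ) :
    (VF2.bracket (W3 γ m) (W3 γ n)).tau t x
      = ((m : ℝ) - (n : ℝ)) * (W3 γ (m + n)).tau t x ∧
    (VF2.bracket (W3 γ m) (W3 γ n)).xi t x
      = ((m : ℝ) - (n : ℝ)) * (W3 γ (m + n)).xi t x := by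
  have hd : Real.exp x - γ ≠ 0 := sub_ne_zero.mpr hx
  have he2 : Real.exp (2*x) = Real.exp x * Real.exp x := by
    rw [two_mul, Real.exp_add]
  have hR : Real.exp (-((m+n : ℤ):ℝ)*t + (((m+n : ℤ):ℝ)-1)*x)
      = Real.exp (-(m:ℝ)*t + ((m:ℝ)-1)*x) * Real.exp (-(n:ℝ)*t + ((n:ℝ)-1)*x)
        * Real.exp x := by
    rw [← Real.exp_add, ← Real.exp_add]
    push_cast
    ring_nf
  have hc1 : (Real.exp x - γ)^(-(m+n)-1 : ℤ)
      = (Real.exp x - γ)^(-m:ℤ) * ((Real.exp x - γ)^(-n:ℤ) * (Real.exp x - γ)⁻¹) := by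
    rw [show (-(m+n)-1:ℤ) = -m + (-n + (-1)) by ring, zpow_add₀ hd, zpow_add₀ hd, zpow_neg_one]
  have hc2 : (Real.exp x - γ)^(-(m+n) : ℤ)
      = (Real.exp x - γ)^(-m:ℤ) * (Real.exp x - γ)^(-n:ℤ) := by
    rw [show (-(m+n):ℤ) = -m + -n by ring, zpow_add₀ hd]
  have em1 : (Real.exp x - γ)^(-m-1 : ℤ)
      = (Real.exp x - γ)^(-m:ℤ) * (Real.exp x - γ)⁻¹ := by
    rw [show (-m-1:ℤ) = -m + (-1) by ring, zpow_add₀ hd, zpow_neg_one]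
  have en1 : (Real.exp x - γ)^(-n-1 : ℤ)
      = (Real.exp x - γ)^(-n:ℤ) * (Real.exp x - γ)⁻¹ := by
    rw [show (-n-1:ℤ) = -n + (-1) by ring, zpow_add₀ hd, zpow_neg_one]
  constructor
  · simp only [VF2.bracket, VF2.app]
    rw [qt_W3_tau γ m t x, qt_W3_tau γ n t x, qx_W3_tau γ m t x hd, qx_W3_tau γ n t x hd]
    simp only [W3]
    rw [hR, hc1, he2, em1, en1]
    push_cast
    generalize Real.exp (-(m:ℝ)*t + ((m:ℝ)-1)*x) = P
    generalize Real.exp (-(n:ℝ)*t + ((n:ℝ)-1)*x) = Q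
    generalize hE : Real.exp x = E at hd ⊢
    generalize (E - γ) ^ (-m : ℤ) = a
    generalize (E - γ) ^ (-n : ℤ) = b
    field_simp
    ring
  · simp only [VF2.bracket, VF2.app]
    rw [qt_W3_xi γ m t x, qt_W3_xi γ n t x, qx_W3_xi γ m t x hd, qx_W3_xi γ n t x hd]
    simp only [W3]
    rw [hR, hc2, he2, em1, en1]
    push_cast
    generalize Real.exp (-(m:ℝ)*t + ((m:ℝ)-1)*x) = P
    generalize Real.exp (-(n:ℝ)*t + ((n:ℝ)-1)*x) = Q
    generalize hE : Real.exp x = E at hd ⊢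
    generalize (E - γ) ^ (-m : ℤ) = a
    generalize (E - γ) ^ (-n : ℤ) = b
    field_simp
    ring
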